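/- arXiv:1202.5023 — 2 statements merged into one kernel-verified Lean document; each statement's English description precedes it below -/
import Mathlib

section
/- Let F₁ be the cumulative distribution function of a real random variable X with finite first moment, and X' an independent copy of X. Then for every x ∈ ℝ, -∫_{-∞}^{∞} (F₁(y) - 1_{y ≥ x})² dy = (1/2)·E|X - X'| - E|X - x|. -/
open MeasureTheory ProbabilityTheory Set

noncomputable def fstep (a y : ℝ) : ℝ := if a ≤ y then 1 else 0

lemma fstep_sub_of_le {s t : ℝ} (h : s ≤ t) :
    (fun y => fstep s y - fstep t y) = (Ico s t).indicator (fun _ => (1:ℝ)) := by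
  funext y
  simp only [fstep, indicator, mem_Ico]
  split_ifs <;> simp_all <;> linarith

lemma integrable_fstep_sub_of_le {s t : ℝ} (h : s ≤ t) :
    Integrable (fun y => fstep s y - fstep t y) := by
  rw [fstep_sub_of_le h]
  refine (integrable_indicator_iff measurableSet_Ico).2 ?_
  exact integrableOn_const (by simp [Real.volume_Ico, ENNReal.ofReal_lt_top])

lemma integrable_fstep_sub (s t : ℝ) :
    Integrable (fun y => fstep s y - fstep t y) := by
  rcases le_total s t with h | h
  · exact integrable_fstep_sub_of_le h
  · have : (fun y => fstep s y - fstep t y) = fun y => -(fstep t y - fstep s y) := by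
      funext y; ring
    rw [this]
    exact (integrable_fstep_sub_of_le h).neg

lemma integral_fstep_sub_of_le {s t : ℝ} (h : s ≤ t) :
    ∫ y, (fstep s y - fstep t y) = t - s := by
  rw [fstep_sub_of_le h, integral_indicator measurableSet_Ico, setIntegral_const,
    Real.volume_real_Ico_of_le h, smul_eq_mul, mul_one]

lemma integral_fstep_sub (s t : ℝ) :
    ∫ y, (fstep s y - fstep t y) = t - s := by
  rcases le_total s t with h | h
  · exact integral_fstep_sub_of_le h
  · have : (fun y => fstep s y - fstep t y) = fun y => -(fstep t y - fstep s y) := by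
      funext y; ring
    rw [this, integral_neg, integral_fstep_sub_of_le h]; ring

lemma abs_fstep_sub (s t : ℝ) (h : s ≤ t) (y : ℝ) :
    |fstep s y - fstep t y| = fstep s y - fstep t y := by
  apply abs_of_nonneg
  simp only [fstep]
  split_ifs <;> simp_all <;> linarith

lemma integral_abs_fstep_sub (s t : ℝ) :
    ∫ y, |fstep s y - fstep t y| = |t - s| := by
  rcases le_total s t with h | h
  · simp_rw [abs_fstep_sub s t h]
    rw [integral_fstep_sub, abs_of_nonneg (by linarith)]
  · simp_rw [abs_sub_comm (fstep s _)]
    simp_rw [abs_fstep_sub t s h]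
    rw [integral_fstep_sub, abs_of_nonpos (by linarith)]; ring

lemma abs_fstep_sub_le_one (s t y : ℝ) : |fstep s y - fstep t y| ≤ 1 := by
  simp only [fstep]
  split_ifs <;> norm_num

lemma step_prod (a b x y : ℝ) :
    (fstep a y - fstep x y) * (fstep b y - fstep x y)
      = (fstep (max a b) y - fstep (max a x) y) + (fstep x y - fstep (max b x) y) := by
  simp only [fstep, max_le_iff]
  split_ifs <;> simp_all <;> linarith

lemma integrable_step_prod (a b x : ℝ) :
    Integrable (fun y => (fstep a y - fstep x y) * (fstep b y - fstep x y)) := by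
  simp_rw [step_prod]
  exact (integrable_fstep_sub _ _).add (integrable_fstep_sub _ _)

lemma integral_step_prod (a b x : ℝ) :
    ∫ y, (fstep a y - fstep x y) * (fstep b y - fstep x y)
      = max a x + max b x - max a b - x := by
  simp_rw [step_prod]
  rw [integral_add (integrable_fstep_sub _ _) (integrable_fstep_sub _ _),
    integral_fstep_sub, integral_fstep_sub]
  ring

lemma max_eq_half (u v : ℝ) : max u v = (u + v + |u - v|) / 2 := by
  rcases le_total u v with h | h
  · rw [max_eq_right h, abs_of_nonpos (by linarith)]; ring
  · rw [max_eq_left h, abs_of_nonneg (by linarith)]; ring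

variable {ν : Measure ℝ} [IsProbabilityMeasure ν]

lemma integrable_comp_fst {g : ℝ → ℝ} (hg : Integrable g ν) :
    Integrable (fun p : ℝ × ℝ => g p.1) (ν.prod ν) := by
  refine (integrable_prod_iff hg.aestronglyMeasurable.comp_fst).2 ⟨?_, ?_⟩
  · exact Filter.Eventually.of_forall fun a => (integrable_const (g a) : _)
  · simpa using hg.norm

lemma integrable_comp_snd {g : ℝ → ℝ} (hg : Integrable g ν) :
    Integrable (fun p : ℝ × ℝ => g p.2) (ν.prod ν) := by
  refine (integrable_prod_iff' hg.aestronglyMeasurable.comp_snd).2 ⟨?_, ?_⟩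
  · exact Filter.Eventually.of_forall fun a => (integrable_const (g a) : _)
  · simpa using hg.norm

/-- For `F₁` the cdf of a distribution `ν` on `ℝ` with finite first moment and `X, X' ~ ν`
independent, `CRPS(F₁,x) = -∫ (F₁(y) - 1_{y ≥ x})² dy = (1/2)·E|X-X'| - E|X-x|`. -/
theorem stmt_8 (ν : Measure ℝ) [IsProbabilityMeasure ν]
    (hint : Integrable (fun x : ℝ => x) ν) :
    ∀ x : ℝ,
      -∫ y : ℝ, (cdf ν y - if x ≤ y then (1 : ℝ) else 0) ^ 2
        = (1 / 2) * (∫ a : ℝ, ∫ b : ℝ, |a - b| ∂ν ∂ν) - ∫ a : ℝ, |a - x| ∂ν := by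
  intro x
  -- abbreviations
  set μ2 := ν.prod ν with hμ2
  have habs1 : Integrable (fun p : ℝ × ℝ => |p.1 - x|) μ2 :=
    integrable_comp_fst ((hint.sub (integrable_const x)).abs)
  have habs2 : Integrable (fun p : ℝ × ℝ => |p.2 - x|) μ2 :=
    integrable_comp_snd ((hint.sub (integrable_const x)).abs)
  have habs12 : Integrable (fun p : ℝ × ℝ => |p.1 - p.2|) μ2 := by
    have hcont : Continuous (fun p : ℝ × ℝ => |p.1 - p.2|) :=
      (continuous_fst.sub continuous_snd).abs
    refine Integrable.mono ((integrable_comp_fst hint.abs).add (integrable_comp_snd hint.abs))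
      hcont.aestronglyMeasurable (Filter.Eventually.of_forall fun p => ?_)
    simp only [Real.norm_eq_abs, abs_abs]
    calc |p.1 - p.2| ≤ |p.1| + |p.2| := abs_sub _ _
      _ ≤ |(|p.1| + |p.2|)| := le_abs_self _
  -- measurability of the big kernel
  have hmeas : Measurable (fun z : (ℝ × ℝ) × ℝ =>
      (fstep z.1.1 z.2 - fstep x z.2) * (fstep z.1.2 z.2 - fstep x z.2)) := by
    have m1 : Measurable (fun z : (ℝ × ℝ) × ℝ => fstep z.1.1 z.2) :=
      Measurable.ite (measurableSet_le (measurable_fst.fst) measurable_snd)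
        measurable_const measurable_const
    have m2 : Measurable (fun z : (ℝ × ℝ) × ℝ => fstep z.1.2 z.2) :=
      Measurable.ite (measurableSet_le (measurable_fst.snd) measurable_snd)
        measurable_const measurable_const
    have m3 : Measurable (fun z : (ℝ × ℝ) × ℝ => fstep x z.2) :=
      Measurable.ite (measurableSet_le measurable_const measurable_snd)
        measurable_const measurable_const
    exact ((m1.sub m3).mul (m2.sub m3))
  -- integrability of the big kernel on the product
  have hbig : Integrable (Function.uncurry (fun (p : ℝ × ℝ) (y : ℝ) =>
      (fstep p.1 y - fstep x y) * (fstep p.2 y - fstep x y))) (μ2.prod volume) := by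
    refine (integrable_prod_iff hmeas.aestronglyMeasurable).2 ⟨?_, ?_⟩
    · exact Filter.Eventually.of_forall fun p => integrable_step_prod p.1 p.2 x
    · refine Integrable.mono habs1
        (hmeas.aestronglyMeasurable.norm.integral_prod_right')
        (Filter.Eventually.of_forall fun p => ?_)
      simp only [Real.norm_eq_abs]
      have h1 : ∫ y, |(fstep p.1 y - fstep x y) * (fstep p.2 y - fstep x y)|
          ≤ ∫ y, |fstep p.1 y - fstep x y| := by
        refine integral_mono (integrable_step_prod p.1 p.2 x).abs
          (integrable_fstep_sub _ _).abs fun y => ?_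
        rw [abs_mul]
        calc |fstep p.1 y - fstep x y| * |fstep p.2 y - fstep x y|
            ≤ |fstep p.1 y - fstep x y| * 1 :=
              mul_le_mul_of_nonneg_left (abs_fstep_sub_le_one _ _ _) (abs_nonneg _)
          _ = |fstep p.1 y - fstep x y| := mul_one _
      have h2 : ∫ y, |fstep p.1 y - fstep x y| = |p.1 - x| := by
        rw [integral_abs_fstep_sub, abs_sub_comm]
      have h3 : (0:ℝ) ≤ ∫ y, |(fstep p.1 y - fstep x y) * (fstep p.2 y - fstep x y)| :=
        integral_nonneg fun y => abs_nonneg _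
      rw [abs_of_nonneg h3]
      calc ∫ y, |(fstep p.1 y - fstep x y) * (fstep p.2 y - fstep x y)|
          ≤ |p.1 - x| := h2 ▸ h1
        _ ≤ |(|p.1 - x|)| := le_abs_self _
  -- pointwise: (cdf ν y - fstep x y) = ∫ a, (fstep a y - fstep x y) ∂ν
  have hcdf : ∀ y : ℝ, cdf ν y - fstep x y = ∫ a, (fstep a y - fstep x y) ∂ν := by
    intro y
    have hI : Integrable (fun a => fstep a y) ν := by
      have : (fun a => fstep a y) = (Iic y).indicator (fun _ => (1:ℝ)) := by
        funext a; simp [fstep, indicator, mem_Iic]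
      rw [this]
      exact (integrable_const (1:ℝ)).indicator measurableSet_Iic
    rw [integral_sub hI (integrable_const _), integral_const]
    have : ∫ a, fstep a y ∂ν = cdf ν y := by
      have h1 : (fun a => fstep a y) = fun a => (Iic y).indicator (1 : ℝ → ℝ) a := by
        funext a; simp [fstep, indicator, mem_Iic, Pi.one_apply]
      rw [h1, integral_indicator_one measurableSet_Iic, cdf_eq_real]
    rw [this]
    simp
  -- pointwise: square = integral over product
  have hsq : ∀ y : ℝ, (cdf ν y - fstep x y) ^ 2
      = ∫ p : ℝ × ℝ, (fstep p.1 y - fstep x y) * (fstep p.2 y - fstep x y) ∂μ2 := by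
    intro y
    rw [hcdf y, sq, ← integral_prod_mul]
  -- main computation of LHS
  have key : ∫ y : ℝ, (cdf ν y - fstep x y) ^ 2
      = ∫ p : ℝ × ℝ, (max p.1 x + max p.2 x - max p.1 p.2 - x) ∂μ2 := by
    calc ∫ y : ℝ, (cdf ν y - fstep x y) ^ 2
        = ∫ y : ℝ, ∫ p : ℝ × ℝ, (fstep p.1 y - fstep x y) * (fstep p.2 y - fstep x y) ∂μ2 := by
          exact integral_congr_ae (Filter.Eventually.of_forall fun y => hsq y)
      _ = ∫ p : ℝ × ℝ, ∫ y : ℝ, (fstep p.1 y - fstep x y) * (fstep p.2 y - fstep x y) ∂volume ∂μ2 :=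
          (integral_integral_swap hbig).symm
      _ = ∫ p : ℝ × ℝ, (max p.1 x + max p.2 x - max p.1 p.2 - x) ∂μ2 := by
          exact integral_congr_ae (Filter.Eventually.of_forall fun p => integral_step_prod p.1 p.2 x)
  -- RHS pieces
  have hR1 : ∫ a : ℝ, ∫ b : ℝ, |a - b| ∂ν ∂ν = ∫ p : ℝ × ℝ, |p.1 - p.2| ∂μ2 :=
    (integral_prod _ habs12).symm
  have hR2 : ∫ a : ℝ, |a - x| ∂ν = ∫ p : ℝ × ℝ, |p.1 - x| ∂μ2 := by
    rw [integral_prod _ habs1]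
    simp [integral_const]
  have hR3 : ∫ a : ℝ, |a - x| ∂ν = ∫ p : ℝ × ℝ, |p.2 - x| ∂μ2 := by
    rw [integral_prod _ habs2]
    simp [integral_const]
  -- pointwise identity
  have hpt : ∀ p : ℝ × ℝ, -(max p.1 x + max p.2 x - max p.1 p.2 - x)
      = (1/2) * |p.1 - p.2| - (1/2) * |p.1 - x| - (1/2) * |p.2 - x| := by
    intro p
    rw [max_eq_half p.1 x, max_eq_half p.2 x, max_eq_half p.1 p.2]
    ring
  have hite : (fun y : ℝ => (cdf ν y - if x ≤ y then (1:ℝ) else 0) ^ 2)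
      = fun y => (cdf ν y - fstep x y) ^ 2 := rfl
  calc -∫ y : ℝ, (cdf ν y - if x ≤ y then (1 : ℝ) else 0) ^ 2
      = -∫ y : ℝ, (cdf ν y - fstep x y) ^ 2 := by rw [hite]
    _ = -∫ p : ℝ × ℝ, (max p.1 x + max p.2 x - max p.1 p.2 - x) ∂μ2 := by rw [key]
    _ = ∫ p : ℝ × ℝ, ((1/2) * |p.1 - p.2| - (1/2) * |p.1 - x| - (1/2) * |p.2 - x|) ∂μ2 := by
        rw [← integral_neg]
        exact integral_congr_ae (Filter.Eventually.of_forall fun p => hpt p)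
    _ = (1/2) * (∫ p : ℝ × ℝ, |p.1 - p.2| ∂μ2) - (1/2) * (∫ p : ℝ × ℝ, |p.1 - x| ∂μ2)
          - (1/2) * (∫ p : ℝ × ℝ, |p.2 - x| ∂μ2) := by
        have i1 : Integrable (fun p : ℝ × ℝ => (1:ℝ)/2 * |p.1 - p.2| - 1/2 * |p.1 - x|) μ2 :=
          (habs12.const_mul _).sub (habs1.const_mul _)
        have i2 : Integrable (fun p : ℝ × ℝ => (1:ℝ)/2 * |p.2 - x|) μ2 := habs2.const_mul _
        have i3 : Integrable (fun p : ℝ × ℝ => (1:ℝ)/2 * |p.1 - p.2|) μ2 := habs12.const_mul _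
        have i4 : Integrable (fun p : ℝ × ℝ => (1:ℝ)/2 * |p.1 - x|) μ2 := habs1.const_mul _
        rw [integral_sub i1 i2, integral_sub i3 i4,
          integral_const_mul, integral_const_mul, integral_const_mul]
    _ = (1 / 2) * (∫ a : ℝ, ∫ b : ℝ, |a - b| ∂ν ∂ν) - ∫ a : ℝ, |a - x| ∂ν := by
        rw [← hR1, ← hR2, ← hR3]; ring
end

section
/- For any cumulative distribution function F₁ of an integrable random variable, CRPS(F₁, F₁) := ∫ CRPS(F₁, x) dF₁(x) = -(1/2)·E|X - X'| ≤ 0, where X, X' are i.i.d. with distribution F₁. -/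
open MeasureTheory ProbabilityTheory Set ENNReal

lemma lint_if (ν : Measure ℝ) [IsProbabilityMeasure ν] (y : ℝ) (c d : ℝ≥0∞) :
    ∫⁻ x, (if x ≤ y then c else d) ∂ν
      = c * ENNReal.ofReal (cdf ν y) + d * ENNReal.ofReal (1 - cdf ν y) := by
  have hs : MeasurableSet (Set.Iic y) := measurableSet_Iic
  have h1 : ∫⁻ x in Set.Iic y, (if x ≤ y then c else d) ∂ν = c * ν (Set.Iic y) := by
    rw [setLIntegral_congr_fun hs (fun x (hx : x ∈ Set.Iic y) => (if_pos (c := x ≤ y) hx : (if x ≤ y then c else d) = c)),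
      setLIntegral_const]
  have h2 : ∫⁻ x in (Set.Iic y)ᶜ, (if x ≤ y then c else d) ∂ν = d * ν (Set.Iic y)ᶜ := by
    rw [setLIntegral_congr_fun hs.compl (fun x (hx : x ∈ (Set.Iic y)ᶜ) => (if_neg (c := x ≤ y) hx : (if x ≤ y then c else d) = d)),
      setLIntegral_const]
  have hIic : ν (Set.Iic y) = ENNReal.ofReal (cdf ν y) := (ofReal_cdf ν y).symm
  have hcompl : ν (Set.Iic y)ᶜ = ENNReal.ofReal (1 - cdf ν y) := by
    rw [measure_compl hs (measure_ne_top _ _), measure_univ, hIic,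
      ENNReal.ofReal_sub _ (cdf_nonneg ν y), ENNReal.ofReal_one]
  rw [← lintegral_add_compl _ hs, h1, h2, hIic, hcompl]

lemma inner_nu (ν : Measure ℝ) [IsProbabilityMeasure ν] (y : ℝ) :
    ∫⁻ x, ENNReal.ofReal ((cdf ν y - if x ≤ y then (1:ℝ) else 0) ^ 2) ∂ν
      = ENNReal.ofReal (cdf ν y * (1 - cdf ν y)) := by
  have h : ∀ x : ℝ, ENNReal.ofReal ((cdf ν y - if x ≤ y then (1:ℝ) else 0) ^ 2)
      = if x ≤ y then ENNReal.ofReal ((cdf ν y - 1) ^ 2)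
        else ENNReal.ofReal ((cdf ν y) ^ 2) := by
    intro x; split_ifs <;> simp
  rw [lintegral_congr h, lint_if, ← ENNReal.ofReal_mul (sq_nonneg _),
    ← ENNReal.ofReal_mul (sq_nonneg _),
    ← ENNReal.ofReal_add (mul_nonneg (sq_nonneg _) (cdf_nonneg ν y))
      (mul_nonneg (sq_nonneg _) (by linarith [cdf_le_one ν y]))]
  congr 1
  ring

private lemma abs_lint_aux {a b : ℝ} (h : a ≤ b) :
    ∫⁻ y, ENNReal.ofReal
        (((if a ≤ y then (1:ℝ) else 0) - if b ≤ y then 1 else 0) ^ 2)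
      = ENNReal.ofReal |a - b| := by
  have hpt : ∀ y : ℝ, ENNReal.ofReal
      (((if a ≤ y then (1:ℝ) else 0) - if b ≤ y then 1 else 0) ^ 2)
      = Set.indicator (Set.Ico a b) (fun _ => (1 : ℝ≥0∞)) y := by
    intro y
    by_cases h1 : a ≤ y <;> by_cases h2 : b ≤ y
    · simp [Set.indicator, Set.mem_Ico, h1, h2, not_lt.mpr h2]
    · simp [Set.indicator, Set.mem_Ico, h1, h2, lt_of_not_ge h2]
    · exact absurd (h.trans h2) h1
    · simp [Set.indicator, Set.mem_Ico, h1, h2]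
  rw [lintegral_congr hpt, lintegral_indicator measurableSet_Ico]
  simp [Real.volume_Ico, abs_of_nonpos (by linarith : a - b ≤ 0), neg_sub]

lemma abs_lint (a b : ℝ) :
    ∫⁻ y, ENNReal.ofReal
        (((if a ≤ y then (1:ℝ) else 0) - if b ≤ y then 1 else 0) ^ 2)
      = ENNReal.ofReal |a - b| := by
  rcases le_total a b with h | h
  · exact abs_lint_aux h
  · have := abs_lint_aux h
    rw [abs_sub_comm]
    rw [← this]
    apply lintegral_congr
    intro y
    congr 1
    ring

lemma prod_inner (ν : Measure ℝ) [IsProbabilityMeasure ν] (y : ℝ) :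
    ∫⁻ p : ℝ × ℝ, ENNReal.ofReal
        (((if p.1 ≤ y then (1:ℝ) else 0) - if p.2 ≤ y then 1 else 0) ^ 2) ∂(ν.prod ν)
      = 2 * ENNReal.ofReal (cdf ν y * (1 - cdf ν y)) := by
  have m1 : Measurable fun p : ℝ × ℝ => (if p.1 ≤ y then (1:ℝ) else 0) :=
    Measurable.ite (measurableSet_le measurable_fst measurable_const)
      measurable_const measurable_const
  have m2 : Measurable fun p : ℝ × ℝ => (if p.2 ≤ y then (1:ℝ) else 0) :=
    Measurable.ite (measurableSet_le measurable_snd measurable_const)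
      measurable_const measurable_const
  have hm : Measurable fun p : ℝ × ℝ => ENNReal.ofReal
      (((if p.1 ≤ y then (1:ℝ) else 0) - if p.2 ≤ y then 1 else 0) ^ 2) :=
    ((m1.sub m2).pow_const 2).ennreal_ofReal
  rw [lintegral_prod _ hm.aemeasurable]
  have hinner : ∀ a : ℝ, ∫⁻ b, ENNReal.ofReal
      (((if a ≤ y then (1:ℝ) else 0) - if b ≤ y then 1 else 0) ^ 2) ∂ν
      = if a ≤ y then ENNReal.ofReal (1 - cdf ν y) else ENNReal.ofReal (cdf ν y) := by
    intro a
    by_cases ha : a ≤ y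
    · rw [if_pos ha]
      have : ∀ b : ℝ, ENNReal.ofReal
          (((1:ℝ) - if b ≤ y then 1 else 0) ^ 2)
          = if b ≤ y then 0 else 1 := by
        intro b; split_ifs <;> simp
      rw [lintegral_congr this, lint_if]; simp [ha]
    · rw [if_neg ha]
      have : ∀ b : ℝ, ENNReal.ofReal
          (((0:ℝ) - if b ≤ y then 1 else 0) ^ 2)
          = if b ≤ y then 1 else 0 := by
        intro b; split_ifs <;> simp
      rw [lintegral_congr this, lint_if]; simp [ha]
  rw [lintegral_congr hinner, lint_if, ← ENNReal.ofReal_mul (by linarith [cdf_le_one ν y] :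
      (0:ℝ) ≤ 1 - cdf ν y),
    ← ENNReal.ofReal_mul (cdf_nonneg ν y), mul_comm (1 - cdf ν y) (cdf ν y), two_mul]

/-- For `F₁` the cdf of a distribution `ν` on `ℝ` with finite first moment and `X, X' ~ ν`
independent, `CRPS(F₁,F₁) = ∫ CRPS(F₁,x) dF₁(x) = -(1/2)·E|X-X'| ≤ 0`. -/
theorem stmt_9 (ν : Measure ℝ) [IsProbabilityMeasure ν]
    (hint : Integrable (fun x : ℝ => x) ν) :
    (∫ x : ℝ, (-∫ y : ℝ, (cdf ν y - if x ≤ y then (1 : ℝ) else 0) ^ 2) ∂ν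
        = -(1 / 2) * (∫ a : ℝ, ∫ b : ℝ, |a - b| ∂ν ∂ν)) ∧
      (∫ x : ℝ, (-∫ y : ℝ, (cdf ν y - if x ≤ y then (1 : ℝ) else 0) ^ 2) ∂ν ≤ 0) := by
  have hFm : Measurable (cdf ν) := (monotone_cdf ν).measurable
  have hind : Measurable fun p : ℝ × ℝ => (if p.1 ≤ p.2 then (1:ℝ) else 0) :=
    Measurable.ite (measurableSet_le measurable_fst measurable_snd)
      measurable_const measurable_const
  have hm : Measurable fun p : ℝ × ℝ =>
      ENNReal.ofReal ((cdf ν p.2 - if p.1 ≤ p.2 then (1:ℝ) else 0) ^ 2) :=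
    (((hFm.comp measurable_snd).sub hind).pow_const 2).ennreal_ofReal
  set K := ∫⁻ y, ENNReal.ofReal (cdf ν y * (1 - cdf ν y)) with hKdef
  have hswap : ∫⁻ x, (∫⁻ y,
      ENNReal.ofReal ((cdf ν y - if x ≤ y then (1:ℝ) else 0) ^ 2)) ∂ν = K := by
    rw [lintegral_lintegral_swap hm.aemeasurable]
    exact lintegral_congr fun y => inner_nu ν y
  have hmapf : (ν.prod ν).map Prod.fst = ν := by
    rw [Measure.map_fst_prod]; simp
  have hmaps : (ν.prod ν).map Prod.snd = ν := by
    rw [Measure.map_snd_prod]; simp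
  have hi1 : Integrable (fun p : ℝ × ℝ => p.1) (ν.prod ν) :=
    (integrable_map_measure (f := Prod.fst) (g := fun x : ℝ => x)
      (by rw [hmapf]; exact hint.aestronglyMeasurable) measurable_fst.aemeasurable).mp
      (by rw [hmapf]; exact hint)
  have hi2 : Integrable (fun p : ℝ × ℝ => p.2) (ν.prod ν) :=
    (integrable_map_measure (f := Prod.snd) (g := fun x : ℝ => x)
      (by rw [hmaps]; exact hint.aestronglyMeasurable) measurable_snd.aemeasurable).mp
      (by rw [hmaps]; exact hint)
  have habs : Integrable (fun p : ℝ × ℝ => |p.1 - p.2|) (ν.prod ν) := (hi1.sub hi2).abs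
  have hP : ∫⁻ p : ℝ × ℝ, ENNReal.ofReal |p.1 - p.2| ∂(ν.prod ν) = 2 * K := by
    have h1 : ∀ p : ℝ × ℝ, ENNReal.ofReal |p.1 - p.2|
        = ∫⁻ y, ENNReal.ofReal
            (((if p.1 ≤ y then (1:ℝ) else 0) - if p.2 ≤ y then 1 else 0) ^ 2) :=
      fun p => (abs_lint p.1 p.2).symm
    have a1 : Measurable fun q : (ℝ × ℝ) × ℝ => (if q.1.1 ≤ q.2 then (1:ℝ) else 0) :=
      Measurable.ite (measurableSet_le (measurable_fst.fst) measurable_snd)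
        measurable_const measurable_const
    have a2 : Measurable fun q : (ℝ × ℝ) × ℝ => (if q.1.2 ≤ q.2 then (1:ℝ) else 0) :=
      Measurable.ite (measurableSet_le (measurable_fst.snd) measurable_snd)
        measurable_const measurable_const
    have hmq : Measurable fun q : (ℝ × ℝ) × ℝ => ENNReal.ofReal
        (((if q.1.1 ≤ q.2 then (1:ℝ) else 0) - if q.1.2 ≤ q.2 then 1 else 0) ^ 2) :=
      ((a1.sub a2).pow_const 2).ennreal_ofReal
    rw [lintegral_congr h1, lintegral_lintegral_swap hmq.aemeasurable,
      lintegral_congr fun y => prod_inner ν y,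
      lintegral_const_mul 2 (Measurable.ennreal_ofReal (f := fun y => cdf ν y * (1 - cdf ν y))
        (hFm.mul ((measurable_const.sub hFm))))]
  have hPfin : ∫⁻ p : ℝ × ℝ, ENNReal.ofReal |p.1 - p.2| ∂(ν.prod ν) < ⊤ := by
    have h := habs.hasFiniteIntegral
    simpa [HasFiniteIntegral, Real.enorm_eq_ofReal_abs] using h
  have hKfin : K ≠ ⊤ := by
    have h2 : 2 * K ≠ ⊤ := by rw [← hP]; exact hPfin.ne
    intro h; rw [h, ENNReal.mul_top (by norm_num)] at h2; exact h2 rfl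
  have hIx : ∀ x : ℝ, (∫ y : ℝ, (cdf ν y - if x ≤ y then (1:ℝ) else 0) ^ 2)
      = (∫⁻ y, ENNReal.ofReal ((cdf ν y - if x ≤ y then (1:ℝ) else 0) ^ 2)).toReal := by
    intro x
    exact integral_eq_lintegral_of_nonneg_ae (ae_of_all _ fun y => sq_nonneg _)
      ((hFm.sub (Measurable.ite (measurableSet_le measurable_const measurable_id)
        measurable_const measurable_const)).pow_const 2).aestronglyMeasurable
  have hJm : Measurable fun x : ℝ =>
      ∫⁻ y, ENNReal.ofReal ((cdf ν y - if x ≤ y then (1:ℝ) else 0) ^ 2) :=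
    Measurable.lintegral_prod_right
      (f := fun x y => ENNReal.ofReal ((cdf ν y - if x ≤ y then (1:ℝ) else 0) ^ 2)) hm
  have hJfin : ∀ᵐ x ∂ν, (∫⁻ y,
      ENNReal.ofReal ((cdf ν y - if x ≤ y then (1:ℝ) else 0) ^ 2)) < ⊤ :=
    ae_lt_top hJm (by rw [hswap]; exact hKfin)
  have hLHS : ∫ x : ℝ, (-∫ y : ℝ, (cdf ν y - if x ≤ y then (1:ℝ) else 0) ^ 2) ∂ν
      = -(K.toReal) := by
    rw [integral_neg,
      show (fun x : ℝ => ∫ y : ℝ, (cdf ν y - if x ≤ y then (1:ℝ) else 0) ^ 2)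
        = fun x : ℝ => (∫⁻ y,
            ENNReal.ofReal ((cdf ν y - if x ≤ y then (1:ℝ) else 0) ^ 2)).toReal
        from funext hIx,
      integral_toReal hJm.aemeasurable hJfin, hswap]
  have hRHS : ∫ a : ℝ, ∫ b : ℝ, |a - b| ∂ν ∂ν = 2 * K.toReal := by
    rw [integral_integral (f := fun a b : ℝ => |a - b|) habs,
      integral_eq_lintegral_of_nonneg_ae (f := fun p : ℝ × ℝ => |p.1 - p.2|)
        (ae_of_all _ fun p => abs_nonneg _)
        ((measurable_fst.sub measurable_snd).abs).aestronglyMeasurable,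
      hP, ENNReal.toReal_mul]
    norm_num
  refine ⟨?_, ?_⟩
  · rw [hLHS, hRHS]; ring
  · rw [hLHS]; simp [ENNReal.toReal_nonneg]
end
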